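/- If 𝔐 = (V, ⟨·,·⟩, R) is a Lorentzian model which is Jacobi–Tsankov, then R = 0. -/

import Mathlib

private lemma stmt5_aux_form {V : Type*} [AddCommGroup V] [Module ℝ V] {n : ℕ}
    (B : V →ₗ[ℝ] V →ₗ[ℝ] ℝ)
    (e : Module.Basis (Fin n) ℝ V)
    (hLor : ∀ i j, B (e i) (e j) =
      if i = j then (if (i : ℕ) = 0 then (-1 : ℝ) else 1) else 0)
    (v w : V) :
    B v w = ∑ i : Fin n,
      (if (i : ℕ) = 0 then (-1 : ℝ) else 1) * (e.repr v i) * (e.repr w i) := by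
  conv_lhs => rw [← e.sum_repr v, ← e.sum_repr w]
  simp only [map_sum, map_smul, LinearMap.sum_apply, LinearMap.smul_apply, smul_eq_mul, hLor,
    mul_ite, mul_zero, mul_one, mul_neg, Finset.sum_ite_eq, Finset.sum_ite_eq',
    Finset.mem_univ, if_true]
  apply Finset.sum_congr rfl
  intro i _
  split <;> simp_all <;> ring

private lemma stmt5_aux_null {V : Type*} [AddCommGroup V] [Module ℝ V] {n : ℕ}
    (B : V →ₗ[ℝ] V →ₗ[ℝ] ℝ)
    (e : Module.Basis (Fin n) ℝ V)
    (hLor : ∀ i j, B (e i) (e j) =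
      if i = j then (if (i : ℕ) = 0 then (-1 : ℝ) else 1) else 0)
    (hn : 0 < n)
    (v : V) (h0 : B v v = 0) (hc : e.repr v ⟨0, hn⟩ = 0) : v = 0 := by
  have hsum : ∑ i : Fin n,
      (if (i : ℕ) = 0 then (-1 : ℝ) else 1) * (e.repr v i) * (e.repr v i) = 0 := by
    rw [← stmt5_aux_form B e hLor]; exact h0
  have hi0 : ∀ i : Fin n, (i : ℕ) = 0 → i = ⟨0, hn⟩ := by
    intro i h
    exact Fin.ext h
  have hnonneg : ∀ i ∈ Finset.univ,
      0 ≤ (if ((i : Fin n) : ℕ) = 0 then (-1 : ℝ) else 1) * (e.repr v i) * (e.repr v i) := by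
    intro i _
    by_cases h : (i : ℕ) = 0
    · rw [hi0 i h, hc]
      simp
    · simp only [h, if_false, one_mul]
      exact mul_self_nonneg _
  have hzero := (Finset.sum_eq_zero_iff_of_nonneg hnonneg).mp hsum
  have hrep : ∀ i, e.repr v i = 0 := by
    intro i
    by_cases h : (i : ℕ) = 0
    · rw [hi0 i h]; exact hc
    · have := hzero i (Finset.mem_univ i)
      simp only [h, if_false, one_mul] at this
      exact mul_self_eq_zero.mp this
  have : e.repr v = 0 := Finsupp.ext hrep
  exact e.repr.map_eq_zero_iff.mp this

/-- A Lorentzian Jacobi–Tsankov model has R = 0. -/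
theorem stmt5 {V : Type*} [AddCommGroup V] [Module ℝ V] [FiniteDimensional ℝ V]
    {n : ℕ}
    (B : V →ₗ[ℝ] V →ₗ[ℝ] ℝ)
    (hBsymm : ∀ x y, B x y = B y x)
    (hBnd : ∀ x, (∀ y, B x y = 0) → x = 0)
    (e : Module.Basis (Fin n) ℝ V)
    (hLor : ∀ i j, B (e i) (e j) =
      if i = j then (if (i : ℕ) = 0 then (-1 : ℝ) else 1) else 0)
    (R : V →ₗ[ℝ] V →ₗ[ℝ] V →ₗ[ℝ] V →ₗ[ℝ] ℝ)
    (hR1 : ∀ x y z w, R x y z w = -R y x z w)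
    (hR2 : ∀ x y z w, R x y z w = R z w x y)
    (hR3 : ∀ x y z w, R x y z w + R y z x w + R z x y w = 0)
    (J : V → V →ₗ[ℝ] V)
    (hJ : ∀ x y z, B (J x y) z = R y x x z)
    (hJT : ∀ x y, (J x) ∘ₗ (J y) = (J y) ∘ₗ (J x)) :
    ∀ x y z w, R x y z w = 0 := by
  -- dispose of the trivial case n = 0
  rcases Nat.eq_zero_or_pos n with hn | hn
  · subst hn
    have hV : ∀ v : V, v = 0 := by
      intro v
      apply e.repr.injective
      apply Subsingleton.elim
    intro x y z w
    rw [hV x]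
    simp
  -- antisymmetry in last two slots
  have hR34 : ∀ x y z w, R x y z w = - R x y w z := by
    intro x y z w
    rw [hR2, hR1, hR2 w z]
  -- J x x = 0
  have hJxx : ∀ x, J x x = 0 := by
    intro x
    apply hBnd
    intro w
    rw [hJ]
    have := hR1 x x x w
    linarith
  -- commuting Jacobi operators, pointwise
  have hJcomm : ∀ x y z, J x (J y z) = J y (J x z) := by
    intro x y z
    have := DFunLike.congr_fun (hJT x y) z
    simpa using this
  -- J x (J y x) = 0
  have hJJx : ∀ x y, J x (J y x) = 0 := by
    intro x y
    rw [hJcomm, hJxx, map_zero]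
  -- self-adjointness of J x
  have hselfadj : ∀ x y z, B (J x y) z = B (J x z) y := by
    intro x y z
    rw [hJ, hJ]
    have h1 := hR2 y x x z
    have h2 := hR34 x z x y
    have h3 := hR1 x z x y
    linarith
  -- J x ∘ J x = 0 : first an auxiliary identity
  have hstep : ∀ (x z : V) (s : ℝ), s ≠ 0 → ∀ w, R (J x z) (x + s • z) (x + s • z) w = 0 := by
    intro x z s hs w
    have h0 : J (x + s • z) (J x (x + s • z)) = 0 := hJJx _ _
    have hx : J x (x + s • z) = s • J x z := by rw [map_add, map_smul, hJxx, zero_add]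
    rw [hx, map_smul] at h0
    have h1 : J (x + s • z) (J x z) = 0 := (smul_eq_zero.mp h0).resolve_left hs
    have h2 := hJ (x + s • z) (J x z) w
    rw [h1] at h2
    simpa using h2.symm
  have hA : ∀ x z w, R (J x z) x x w = 0 := by
    intro x z w
    have h1 := hstep x z 1 one_ne_zero w
    have h2 := hstep x z (-1) (by norm_num) w
    have h3 := hstep x z 2 (by norm_num) w
    simp only [one_smul, neg_smul, neg_one_smul, map_add, map_neg, map_smul,
      LinearMap.add_apply, LinearMap.neg_apply, LinearMap.smul_apply, smul_eq_mul] at h1 h2 h3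
    linarith
  have hJsq : ∀ x z, J x (J x z) = 0 := by
    intro x z
    apply hBnd
    intro w
    rw [hJ]
    exact hA x z w
  -- coordinate machinery
  set i₀ : Fin n := ⟨0, hn⟩ with hi₀
  have hnull0 : ∀ v : V, B v v = 0 → e.repr v i₀ = 0 → v = 0 := by
    intro v h0 hc
    exact stmt5_aux_null B e hLor hn v h0 (by rw [← hi₀]; exact hc)
  have hLorKey : ∀ v w : V, B v v = 0 → B w w = 0 → B v w = 0 →
      (e.repr v i₀) • w = (e.repr w i₀) • v := by
    intro v w hv hw hvw
    have h1 : B ((e.repr v i₀) • w - (e.repr w i₀) • v)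
        ((e.repr v i₀) • w - (e.repr w i₀) • v) = 0 := by
      simp only [map_sub, map_smul, LinearMap.sub_apply, LinearMap.smul_apply, smul_eq_mul]
      rw [hBsymm w v, hv, hw, hvw]
      ring
    have h2 : e.repr ((e.repr v i₀) • w - (e.repr w i₀) • v) i₀ = 0 := by
      simp only [map_sub, map_smul, Finsupp.sub_apply, Finsupp.smul_apply, smul_eq_mul]
      ring
    exact sub_eq_zero.mp (hnull0 _ h1 h2)
  -- main step: J x y = 0 for all x y
  have hQ : ∀ x y, B (J x y) y = 0 := by
    intro x y
    set v := J x y with hv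
    set w := J y x with hw
    have hBvv : B v v = 0 := by
      rw [hv, hselfadj, hJsq, map_zero, LinearMap.zero_apply]
    have hBww : B w w = 0 := by
      rw [hw, hselfadj, hJsq, map_zero, LinearMap.zero_apply]
    have hBvw : B v w = 0 := by
      rw [hv, hselfadj x y w, hw, hJcomm, hJxx, map_zero, map_zero, LinearMap.zero_apply]
    have hBvx : B v x = 0 := by
      rw [hv, hJ]
      have := hR34 y x x x
      linarith
    have hwxvy : B w x = B v y := by
      rw [hv, hw, hJ, hJ, hR2]
    have hkey := hLorKey v w hBvv hBww hBvw
    by_cases hc : e.repr v i₀ = 0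
    · have hv0 : v = 0 := hnull0 v hBvv hc
      rw [hv0, map_zero, LinearMap.zero_apply]
    · have happ := congrArg (fun u => B u x) hkey
      simp only [map_smul, LinearMap.smul_apply, smul_eq_mul] at happ
      rw [hBvx, mul_zero] at happ
      have hwx : B w x = 0 := by
        rcases mul_eq_zero.mp happ with h | h
        · exact absurd h hc
        · exact h
      rw [← hwxvy, hwx]
  have hJzero : ∀ x y, J x y = 0 := by
    intro x y
    apply hBnd
    intro z
    have h1 := hQ x (y + z)
    simp only [map_add, LinearMap.add_apply] at h1
    rw [hQ x y] at h1
    rw [hQ x z] at h1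
    have h2 := hselfadj x z y
    linarith
  -- conclude
  have hRxx : ∀ x y w, R y x x w = 0 := by
    intro x y w
    rw [← hJ, hJzero, map_zero, LinearMap.zero_apply]
  have h23 : ∀ x y z w, R y x z w = - R y z x w := by
    intro x y z w
    have h := hRxx (x + z) y w
    simp only [map_add, LinearMap.add_apply] at h
    have h1 := hRxx x y w
    have h2 := hRxx z y w
    linarith
  intro x y z w
  have hb := hR3 x y z w
  have e1 : R y z x w = R x y z w := by
    have h1 := h23 x y z w
    have h2 := hR1 x y z w
    have h3 := h23 z y x w
    have h4 := hR1 y z x w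
    have h5 := hR1 y x z w
    linarith
  have e2 : R z x y w = R x y z w := by
    have h1 : R z x y w = - R x z y w := hR1 z x y w
    have h2 : R x z y w = - R x y z w := h23 z x y w
    linarith
  linarith
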